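/- Let M = diag(z₁,…,z_N) with no three z_j collinear, and suppose t ∈ Δ_N has exactly three positive components t₁,t₂,t₃ > 0, with a = t₁z₁+t₂z₂+t₃z₃. Set u = (√t₁,√t₂,√t₃,0,…,0). Then {⟨Mw,w⟩ : ‖w‖=1, ⟨w,u⟩=0, ⟨Mu,w⟩=0, ⟨Mw,u⟩=0} = conv{z_j : j > 3}. -/

import Mathlib

open Matrix BigOperators Finset

noncomputable section

/-- Numerical range of a complex matrix. -/
def NumRange {n : ℕ} (M : Matrix (Fin n) (Fin n) ℂ) : Set ℂ :=
  { c | ∃ u : Fin n → ℂ, star u ⬝ᵥ u = 1 ∧ star u ⬝ᵥ M.mulVec u = c }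

/-- `C` is a rank-`k` compression of `M`: `C` represents `P_S M |_S` in some
orthonormal basis of a `k`-dimensional subspace `S`. -/
def IsCompression {N k : ℕ} (M : Matrix (Fin N) (Fin N) ℂ)
    (C : Matrix (Fin k) (Fin k) ℂ) : Prop :=
  ∃ f : Fin k → (Fin N → ℂ),
    (∀ i j, star (f i) ⬝ᵥ f j = if i = j then 1 else 0) ∧
    (∀ i j, C i j = star (f i) ⬝ᵥ M.mulVec (f j))

/-- `diag(a,b)` is a compression of `M`. -/
def IsDiagCompression {N : ℕ} (M : Matrix (Fin N) (Fin N) ℂ) (a b : ℂ) : Prop :=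
  ∃ u w : Fin N → ℂ,
    star u ⬝ᵥ u = 1 ∧ star w ⬝ᵥ w = 1 ∧ star u ⬝ᵥ w = 0 ∧
    star u ⬝ᵥ M.mulVec u = a ∧ star w ⬝ᵥ M.mulVec w = b ∧
    star u ⬝ᵥ M.mulVec w = 0 ∧ star w ⬝ᵥ M.mulVec u = 0

/-- The rank-`k` numerical range `Λ_k(M)`. -/
def rankNumRange {N : ℕ} (k : ℕ) (M : Matrix (Fin N) (Fin N) ℂ) : Set ℂ :=
  { c | ∃ P : Matrix (Fin N) (Fin N) ℂ,
      P.IsHermitian ∧ P * P = P ∧ P.rank = k ∧ P * M * P = c • P }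

/-- `M` has an orthonormal basis of eigenvectors with eigenvalue list `z`. -/
def HasONEigenbasis {N : ℕ} (M : Matrix (Fin N) (Fin N) ℂ) (z : Fin N → ℂ) : Prop :=
  ∃ f : Fin N → (Fin N → ℂ),
    (∀ i j, star (f i) ⬝ᵥ f j = if i = j then 1 else 0) ∧
    (∀ j, M.mulVec (f j) = z j • f j)

/-- 2D cross product of complex numbers viewed as plane vectors. -/
def cross2 (p q : ℂ) : ℝ := p.re * q.im - p.im * q.re

lemma sum_eq_three' {N : ℕ} (hN : 3 ≤ N) (f : Fin N → ℂ)
    (h : ∀ j : Fin N, 3 ≤ (j : ℕ) → f j = 0) :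
    ∑ j, f j = f ⟨0, Nat.lt_of_lt_of_le (by norm_num) hN⟩ + f ⟨1, Nat.lt_of_lt_of_le (by norm_num) hN⟩ + f ⟨2, Nat.lt_of_lt_of_le (by norm_num) hN⟩ := by
  have key : ∑ j ∈ ({⟨0, Nat.lt_of_lt_of_le (by norm_num) hN⟩, ⟨1, Nat.lt_of_lt_of_le (by norm_num) hN⟩, ⟨2, Nat.lt_of_lt_of_le (by norm_num) hN⟩} : Finset (Fin N)), f j
      = ∑ j, f j := by
    refine Finset.sum_subset (Finset.subset_univ _) ?_
    intro x _ hx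
    refine h x ?_
    by_contra hc
    push_neg at hc
    exact hx (by simp only [Finset.mem_insert, Finset.mem_singleton, Fin.ext_iff]; omega)
  rw [← key]
  rw [Finset.sum_insert (by simp [Fin.ext_iff]), Finset.sum_insert (by simp [Fin.ext_iff]),
    Finset.sum_singleton, add_assoc]

lemma convexHull_sub_T {N : ℕ} (z : Fin N → ℂ) (x : ℂ)
    (hx : x ∈ convexHull ℝ {c : ℂ | ∃ j : Fin N, 3 ≤ (j : ℕ) ∧ c = z j}) :
    ∃ l : Fin N → ℝ, (∀ j, 0 ≤ l j) ∧ (∀ j : Fin N, (j : ℕ) < 3 → l j = 0) ∧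
      ∑ j, l j = 1 ∧ ∑ j, l j • z j = x := by
  set T : Set ℂ := {x : ℂ | ∃ l : Fin N → ℝ, (∀ j, 0 ≤ l j) ∧
      (∀ j : Fin N, (j : ℕ) < 3 → l j = 0) ∧ ∑ j, l j = 1 ∧ ∑ j, l j • z j = x} with hT
  have hconv : Convex ℝ T := by
    rintro p ⟨l, hl0, hl3, hl1, hlx⟩ q ⟨m, hm0, hm3, hm1, hmx⟩ a b ha hb hab
    refine ⟨fun j => a * l j + b * m j, fun j => add_nonneg (mul_nonneg ha (hl0 j)) (mul_nonneg hb (hm0 j)),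
      fun j hj => by simp [hl3 j hj, hm3 j hj], ?_, ?_⟩
    · rw [Finset.sum_add_distrib, ← Finset.mul_sum, ← Finset.mul_sum, hl1, hm1]
      simpa using hab
    · simp only [add_smul, mul_smul, Finset.sum_add_distrib]
      rw [← Finset.smul_sum, ← Finset.smul_sum, hlx, hmx]
  have hsub : {c : ℂ | ∃ j : Fin N, 3 ≤ (j : ℕ) ∧ c = z j} ⊆ T := by
    rintro c ⟨j, hj, rfl⟩
    refine ⟨fun k => if k = j then 1 else 0, fun k => by positivity, ?_, ?_, ?_⟩
    · intro k hk
      simp only [ite_eq_right_iff]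
      rintro rfl; omega
    · simp
    · simp [ite_smul]
  exact convexHull_min hsub hconv hx

theorem stmt_12 {N : ℕ} (hN : 3 ≤ N) (z : Fin N → ℂ)
    (hz : ∀ i j k : Fin N, i ≠ j → i ≠ k → j ≠ k → AffineIndependent ℝ ![z i, z j, z k])
    (t : Fin N → ℝ) (ht : t ∈ stdSimplex ℝ (Fin N))
    (ht1 : 0 < t ⟨0, by omega⟩) (ht2 : 0 < t ⟨1, by omega⟩) (ht3 : 0 < t ⟨2, by omega⟩)
    (ht0 : ∀ j : Fin N, 3 ≤ (j : ℕ) → t j = 0)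
    (a : ℂ) (ha : a = t ⟨0, by omega⟩ • z ⟨0, by omega⟩ + t ⟨1, by omega⟩ • z ⟨1, by omega⟩
      + t ⟨2, by omega⟩ • z ⟨2, by omega⟩)
    (u : Fin N → ℂ) (hu : u = fun j => (Real.sqrt (t j) : ℂ)) :
    {b : ℂ | ∃ w : Fin N → ℂ, star w ⬝ᵥ w = 1 ∧ star w ⬝ᵥ u = 0 ∧
        star w ⬝ᵥ (Matrix.diagonal z).mulVec u = 0 ∧
        star u ⬝ᵥ (Matrix.diagonal z).mulVec w = 0 ∧
        star w ⬝ᵥ (Matrix.diagonal z).mulVec w = b} =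
      convexHull ℝ {c : ℂ | ∃ j : Fin N, 3 ≤ (j : ℕ) ∧ c = z j} := by
  subst hu
  ext b
  simp only [Set.mem_setOf_eq]
  constructor
  · rintro ⟨w, h1, h2, h3, h4, h5⟩
    simp only [dotProduct, Matrix.mulVec_diagonal, Pi.star_apply, Complex.star_def,
      Complex.conj_ofReal] at h1 h2 h3 h4 h5
    set i0 : Fin N := ⟨0, by omega⟩ with hi0
    set i1 : Fin N := ⟨1, by omega⟩ with hi1
    set i2 : Fin N := ⟨2, by omega⟩ with hi2
    have hi0v : (i0 : ℕ) = 0 := rfl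
    have hi1v : (i1 : ℕ) = 1 := rfl
    have hi2v : (i2 : ℕ) = 2 := rfl
    have hr0 : (Real.sqrt (t i0) : ℂ) ≠ 0 := by
      exact_mod_cast (Real.sqrt_pos.mpr ht1).ne'
    have hr1 : (Real.sqrt (t i1) : ℂ) ≠ 0 := by
      exact_mod_cast (Real.sqrt_pos.mpr ht2).ne'
    have hr2 : (Real.sqrt (t i2) : ℂ) ≠ 0 := by
      exact_mod_cast (Real.sqrt_pos.mpr ht3).ne'
    have e1 : (starRingEnd ℂ) (w i0) * (Real.sqrt (t i0) : ℂ)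
        + (starRingEnd ℂ) (w i1) * (Real.sqrt (t i1) : ℂ)
        + (starRingEnd ℂ) (w i2) * (Real.sqrt (t i2) : ℂ) = 0 :=
      ((sum_eq_three' hN _ (fun j hj => by simp [ht0 j hj])).symm.trans h2)
    have e2 : (starRingEnd ℂ) (w i0) * (z i0 * (Real.sqrt (t i0) : ℂ))
        + (starRingEnd ℂ) (w i1) * (z i1 * (Real.sqrt (t i1) : ℂ))
        + (starRingEnd ℂ) (w i2) * (z i2 * (Real.sqrt (t i2) : ℂ)) = 0 :=
      ((sum_eq_three' hN _ (fun j hj => by simp [ht0 j hj])).symm.trans h3)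
    have e3 : (Real.sqrt (t i0) : ℂ) * (z i0 * w i0)
        + (Real.sqrt (t i1) : ℂ) * (z i1 * w i1)
        + (Real.sqrt (t i2) : ℂ) * (z i2 * w i2) = 0 :=
      ((sum_eq_three' hN _ (fun j hj => by simp [ht0 j hj])).symm.trans h4)
    obtain ⟨x0, y0, hv0⟩ : ∃ x y : ℝ, (starRingEnd ℂ) (w i0) * (Real.sqrt (t i0) : ℂ)
        = (x : ℂ) + (y : ℂ) * Complex.I := ⟨_, _, (Complex.re_add_im _).symm⟩
    obtain ⟨x1, y1, hv1⟩ : ∃ x y : ℝ, (starRingEnd ℂ) (w i1) * (Real.sqrt (t i1) : ℂ)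
        = (x : ℂ) + (y : ℂ) * Complex.I := ⟨_, _, (Complex.re_add_im _).symm⟩
    obtain ⟨x2, y2, hv2⟩ : ∃ x y : ℝ, (starRingEnd ℂ) (w i2) * (Real.sqrt (t i2) : ℂ)
        = (x : ℂ) + (y : ℂ) * Complex.I := ⟨_, _, (Complex.re_add_im _).symm⟩
    have hconj : ∀ x y : ℝ, (starRingEnd ℂ) ((x : ℂ) + (y : ℂ) * Complex.I)
        = (x : ℂ) - (y : ℂ) * Complex.I := by
      intro x y
      apply Complex.ext <;> simp
    have hv0' : w i0 * (Real.sqrt (t i0) : ℂ) = (x0 : ℂ) - (y0 : ℂ) * Complex.I := by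
      have h := congrArg (starRingEnd ℂ) hv0
      rwa [RingHom.map_mul, Complex.conj_conj, Complex.conj_ofReal, hconj x0 y0] at h
    have hv1' : w i1 * (Real.sqrt (t i1) : ℂ) = (x1 : ℂ) - (y1 : ℂ) * Complex.I := by
      have h := congrArg (starRingEnd ℂ) hv1
      rwa [RingHom.map_mul, Complex.conj_conj, Complex.conj_ofReal, hconj x1 y1] at h
    have hv2' : w i2 * (Real.sqrt (t i2) : ℂ) = (x2 : ℂ) - (y2 : ℂ) * Complex.I := by
      have h := congrArg (starRingEnd ℂ) hv2
      rwa [RingHom.map_mul, Complex.conj_conj, Complex.conj_ofReal, hconj x2 y2] at h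
    have gx : (x0 : ℂ) * z i0 + (x1 : ℂ) * z i1 + (x2 : ℂ) * z i2 = 0 := by
      linear_combination e2 / 2 + e3 / 2 - (z i0 / 2) * hv0 - (z i1 / 2) * hv1
        - (z i2 / 2) * hv2 - (z i0 / 2) * hv0' - (z i1 / 2) * hv1' - (z i2 / 2) * hv2'
    have gyI : Complex.I * ((y0 : ℂ) * z i0 + (y1 : ℂ) * z i1 + (y2 : ℂ) * z i2) = 0 := by
      linear_combination e2 / 2 - e3 / 2 - (z i0 / 2) * hv0 - (z i1 / 2) * hv1
        - (z i2 / 2) * hv2 + (z i0 / 2) * hv0' + (z i1 / 2) * hv1' + (z i2 / 2) * hv2'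
    have gy : (y0 : ℂ) * z i0 + (y1 : ℂ) * z i1 + (y2 : ℂ) * z i2 = 0 := by
      rcases mul_eq_zero.mp gyI with h | h
      · exact absurd h Complex.I_ne_zero
      · exact h
    have e1' : ((x0 : ℂ) + (y0 : ℂ) * Complex.I) + ((x1 : ℂ) + (y1 : ℂ) * Complex.I)
        + ((x2 : ℂ) + (y2 : ℂ) * Complex.I) = 0 := by
      rw [← hv0, ← hv1, ← hv2]; exact e1
    have hsx : x0 + x1 + x2 = 0 := by
      have := congrArg Complex.re e1'
      simpa using this
    have hsy : y0 + y1 + y2 = 0 := by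
      have := congrArg Complex.im e1'
      simpa using this
    have hai := affineIndependent_iff.mp (hz i0 i1 i2
      (by simp [hi0, hi1, Fin.ext_iff]) (by simp [hi0, hi2, Fin.ext_iff])
      (by simp [hi1, hi2, Fin.ext_iff]))
    have hX := hai Finset.univ ![x0, x1, x2]
      (by simp [Fin.sum_univ_three, hsx])
      (by simpa [Fin.sum_univ_three, Complex.real_smul] using gx)
    have hY := hai Finset.univ ![y0, y1, y2]
      (by simp [Fin.sum_univ_three, hsy])
      (by simpa [Fin.sum_univ_three, Complex.real_smul] using gy)
    have hx0 : x0 = 0 := by simpa using hX 0 (Finset.mem_univ _)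
    have hx1 : x1 = 0 := by simpa using hX 1 (Finset.mem_univ _)
    have hx2 : x2 = 0 := by simpa using hX 2 (Finset.mem_univ _)
    have hy0 : y0 = 0 := by simpa using hY 0 (Finset.mem_univ _)
    have hy1 : y1 = 0 := by simpa using hY 1 (Finset.mem_univ _)
    have hy2 : y2 = 0 := by simpa using hY 2 (Finset.mem_univ _)
    have hw0 : w i0 = 0 := by
      have h0 : (starRingEnd ℂ) (w i0) * (Real.sqrt (t i0) : ℂ) = 0 := by
        rw [hv0, hx0, hy0]; simp
      rcases mul_eq_zero.mp h0 with h | h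
      · simpa using h
      · exact absurd h hr0
    have hw1 : w i1 = 0 := by
      have h0 : (starRingEnd ℂ) (w i1) * (Real.sqrt (t i1) : ℂ) = 0 := by
        rw [hv1, hx1, hy1]; simp
      rcases mul_eq_zero.mp h0 with h | h
      · simpa using h
      · exact absurd h hr1
    have hw2 : w i2 = 0 := by
      have h0 : (starRingEnd ℂ) (w i2) * (Real.sqrt (t i2) : ℂ) = 0 := by
        rw [hv2, hx2, hy2]; simp
      rcases mul_eq_zero.mp h0 with h | h
      · simpa using h
      · exact absurd h hr2
    have hwlt : ∀ j : Fin N, (j : ℕ) < 3 → w j = 0 := by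
      intro j hj
      have hj3 : j = i0 ∨ j = i1 ∨ j = i2 := by
        simp only [Fin.ext_iff, hi0v, hi1v, hi2v]
        omega
      rcases hj3 with rfl | rfl | rfl <;> assumption
    have hl1 : ∑ j, Complex.normSq (w j) = 1 := by
      have hsum : ((∑ j, Complex.normSq (w j) : ℝ) : ℂ) = 1 := by
        push_cast
        rw [← h1]
        exact Finset.sum_congr rfl fun j _ => by
          rw [← Complex.normSq_eq_conj_mul_self]
      exact_mod_cast hsum
    have hb : ∑ j, Complex.normSq (w j) • z j = b := by
      rw [← h5]
      refine Finset.sum_congr rfl fun j _ => ?_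
      rw [Complex.real_smul, Complex.normSq_eq_conj_mul_self]; ring
    set S : Finset (Fin N) := Finset.univ.filter (fun j => 3 ≤ (j : ℕ)) with hS
    have houtside : ∀ j ∈ Finset.univ, j ∉ S → Complex.normSq (w j) = 0 := by
      intro j _ hj
      have : (j : ℕ) < 3 := by
        by_contra hc
        exact hj (by simp [hS]; omega)
      simp [hwlt j this]
    have hsum_S : ∑ j ∈ S, Complex.normSq (w j) = 1 := by
      rw [← hl1]
      exact Finset.sum_subset (Finset.filter_subset _ _) houtside
    have hb_S : ∑ j ∈ S, Complex.normSq (w j) • z j = b := by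
      rw [← hb]
      refine Finset.sum_subset (Finset.filter_subset _ _) fun j hj hjS => ?_
      rw [houtside j hj hjS, zero_smul]
    have hmem : S.centerMass (fun j => Complex.normSq (w j)) z
        ∈ convexHull ℝ {c : ℂ | ∃ j : Fin N, 3 ≤ (j : ℕ) ∧ c = z j} :=
      S.centerMass_mem_convexHull (fun i _ => Complex.normSq_nonneg _)
        (by rw [hsum_S]; norm_num) (fun i hi => ⟨i, by simpa [hS] using hi, rfl⟩)
    have hb_S' : ∑ j ∈ S, (Complex.normSq (w j) : ℂ) * z j = b := by
      rw [← hb_S]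
      exact Finset.sum_congr rfl fun j _ => by rw [Complex.real_smul]
    simpa [Finset.centerMass, hsum_S, hb_S'] using hmem
  · intro hb
    obtain ⟨l, hl0, hl3, hl1, hlb⟩ := convexHull_sub_T z b hb
    refine ⟨fun j => (Real.sqrt (l j) : ℂ), ?_, ?_, ?_, ?_, ?_⟩ <;>
      simp only [dotProduct, Matrix.mulVec_diagonal, Pi.star_apply, Complex.star_def,
        Complex.conj_ofReal]
    · calc ∑ j, ((Real.sqrt (l j) : ℂ) * (Real.sqrt (l j) : ℂ))
          = ∑ j, ((l j : ℝ) : ℂ) := Finset.sum_congr rfl fun j _ => by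
            rw [← Complex.ofReal_mul, Real.mul_self_sqrt (hl0 j)]
        _ = 1 := by rw [← Complex.ofReal_sum, hl1, Complex.ofReal_one]
    · refine Finset.sum_eq_zero fun j _ => ?_
      rcases lt_or_ge (j : ℕ) 3 with hj | hj
      · simp [hl3 j hj]
      · simp [ht0 j hj]
    · refine Finset.sum_eq_zero fun j _ => ?_
      rcases lt_or_ge (j : ℕ) 3 with hj | hj
      · simp [hl3 j hj]
      · simp [ht0 j hj]
    · refine Finset.sum_eq_zero fun j _ => ?_
      rcases lt_or_ge (j : ℕ) 3 with hj | hj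
      · simp [hl3 j hj]
      · simp [ht0 j hj]
    · rw [← hlb]
      refine Finset.sum_congr rfl fun j _ => ?_
      rw [Complex.real_smul,
        show ((l j : ℝ) : ℂ) = (Real.sqrt (l j) : ℂ) * (Real.sqrt (l j) : ℂ) from by
          rw [← Complex.ofReal_mul, Real.mul_self_sqrt (hl0 j)]]
      ring
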